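/- Ramanujan's mock theta function ψ satisfies the identity ∑_{n≥1} q^{n²}/(q;q²)_n = ∑_{n≥0} q^{n+1} (-q²;q²)_n for all complex q with |q| < 1. -/

import Mathlib

open scoped Real

/-- The q-Pochhammer symbol `(a;b)_n = ∏_{j=0}^{n-1} (1 - a b^j)`. -/
noncomputable def qPoch (a b : ℂ) (n : ℕ) : ℂ := ∏ j ∈ Finset.range n, (1 - a * b ^ j)

noncomputable def myP (q : ℂ) : ℕ → ℕ → ℂ
  | 0, 0 => 1
  | 0, _ + 1 => 0
  | _ + 1, 0 => 1
  | n + 1, k + 1 => myP q n (k + 1) + q ^ (2 * n + 2) * myP q n k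

lemma myP_succ (q : ℂ) (n k : ℕ) :
    myP q (n+1) (k+1) = myP q n (k+1) + q ^ (2*n+2) * myP q n k := rfl

lemma myP_zero_right (q : ℂ) (n : ℕ) : myP q n 0 = 1 := by
  cases n <;> simp [myP]

lemma myP_eq_zero (q : ℂ) : ∀ n k, n < k → myP q n k = 0 := by
  intro n
  induction n with
  | zero => intro k hk; match k, hk with | k+1, _ => simp [myP]
  | succ n ih =>
    intro k hk
    match k, hk with
    | k+1, hk =>
      have h1 : n < k + 1 := by omega
      have h2 : n < k := by omega
      simp [myP, ih _ h1, ih _ h2]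

lemma myP_shift (q : ℂ) : ∀ n k, myP q (n+1) (k+1) = q ^ (2*k+2) * (myP q n k + myP q n (k+1)) := by
  intro n
  induction n with
  | zero =>
    intro k
    cases k with
    | zero => show myP q 0 1 + q ^ (2*0+2) * myP q 0 0 = _; simp [myP]
    | succ k =>
      show myP q 0 (k+2) + q ^ (2*0+2) * myP q 0 (k+1) = _
      simp [myP]
  | succ n ih =>
    intro k
    cases k with
    | zero =>
      have e1 : myP q (n+2) 1 = myP q (n+1) 1 + q ^ (2*(n+1)+2) * myP q (n+1) 0 := rfl
      have e4 : myP q (n+1) 1 = myP q n 1 + q ^ (2*n+2) * myP q n 0 := rfl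
      have hB0 := myP_zero_right q (n+1)
      have hX0 := myP_zero_right q n
      linear_combination e1 + ih 0 - q^2 * e4 + (q^(2*n+4)-q^2) * hB0 + (q^2 - q^(2*n+4)) * hX0
    | succ k =>
      have e1 : myP q (n+2) (k+2) = myP q (n+1) (k+2) + q ^ (2*(n+1)+2) * myP q (n+1) (k+1) := rfl
      have e4 : myP q (n+1) (k+1) = myP q n (k+1) + q ^ (2*n+2) * myP q n k := rfl
      have e5 : myP q (n+1) (k+2) = myP q n (k+2) + q ^ (2*n+2) * myP q n (k+1) := rfl
      linear_combination e1 + ih (k+1) + q^(2*n+4) * ih k - q^(2*k+4) * e5 - q^(2*k+4) * e4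

lemma myP_row_sum (q : ℂ) (n : ℕ) :
    ∑ k ∈ Finset.range (n+1), myP q n k = qPoch (-q^2) (q^2) n := by
  induction n with
  | zero => simp [myP, qPoch]
  | succ n ih =>
    rw [Finset.sum_range_succ' _ (n+1)]
    have h1 : ∀ k, myP q (n+1) (k+1) = myP q n (k+1) + q ^ (2*n+2) * myP q n k := fun k => rfl
    simp only [h1, myP_zero_right, Finset.sum_add_distrib, ← Finset.mul_sum]
    have h2 : ∑ k ∈ Finset.range (n+1), myP q n (k+1) = qPoch (-q^2) (q^2) n - 1 := by
      have e := Finset.sum_range_succ' (fun k => myP q n k) (n+1)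
      have e2 := Finset.sum_range_succ (fun k => myP q n k) (n+1)
      rw [e2, ih, myP_eq_zero q n (n+1) (by omega), myP_zero_right] at e
      linear_combination -e
    rw [h2, ih]
    simp only [qPoch, Finset.prod_range_succ]
    rw [show (q:ℂ) ^ (2*n+2) = q^2 * (q^2)^n by ring]
    ring

lemma myP_norm_le (q : ℂ) : ∀ n k, ‖myP q n k‖ ≤ ∏ j ∈ Finset.range n, (1 + ‖q‖ ^ (2*j+2)) := by
  intro n
  induction n with
  | zero =>
    intro k
    cases k with
    | zero => simp [myP]
    | succ k => simp [myP]
  | succ n ih =>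
    intro k
    have hfac : (0:ℝ) ≤ 1 + ‖q‖ ^ (2*n+2) := by positivity
    cases k with
    | zero =>
      rw [myP_zero_right, norm_one, Finset.prod_range_succ]
      have h1 : (1:ℝ) ≤ ∏ j ∈ Finset.range n, (1 + ‖q‖ ^ (2*j+2)) :=
by
        have := Finset.prod_le_prod (s := Finset.range n) (f := fun _ => (1:ℝ))
          (g := fun j => 1 + ‖q‖ ^ (2*j+2)) (fun i _ => zero_le_one)
          (fun i _ => by have := pow_nonneg (norm_nonneg q) (2*i+2); linarith)
        simpa using this
      nlinarith [pow_nonneg (norm_nonneg q) (2*n+2)]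
    | succ k =>
      rw [myP_succ, Finset.prod_range_succ]
      calc ‖myP q n (k+1) + q ^ (2*n+2) * myP q n k‖
          ≤ ‖myP q n (k+1)‖ + ‖q‖^(2*n+2) * ‖myP q n k‖ := by
            calc ‖myP q n (k+1) + q ^ (2*n+2) * myP q n k‖
                ≤ ‖myP q n (k+1)‖ + ‖q ^ (2*n+2) * myP q n k‖ := norm_add_le _ _
              _ = ‖myP q n (k+1)‖ + ‖q‖^(2*n+2) * ‖myP q n k‖ := by
                  rw [norm_mul, norm_pow]
        _ ≤ (∏ j ∈ Finset.range n, (1 + ‖q‖ ^ (2*j+2)))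
            + ‖q‖^(2*n+2) * ∏ j ∈ Finset.range n, (1 + ‖q‖ ^ (2*j+2)) := by
            have := ih (k+1); have := ih k
            have hp : (0:ℝ) ≤ ‖q‖^(2*n+2) := by positivity
            nlinarith [ih (k+1), ih k, norm_nonneg (myP q n k)]
        _ = (∏ j ∈ Finset.range n, (1 + ‖q‖ ^ (2*j+2))) * (1 + ‖q‖ ^ (2*n+2)) := by ring

lemma prod_bound (q : ℂ) (hq : ‖q‖ < 1) (n : ℕ) :
    ∏ j ∈ Finset.range n, (1 + ‖q‖ ^ (2*j+2)) ≤ Real.exp ((1 - ‖q‖^2)⁻¹) := by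
  have hr2 : ‖q‖^2 < 1 := by
    have := norm_nonneg q
    nlinarith
  calc ∏ j ∈ Finset.range n, (1 + ‖q‖ ^ (2*j+2))
      ≤ ∏ j ∈ Finset.range n, Real.exp (‖q‖ ^ (2*j+2)) := by
        apply Finset.prod_le_prod
        · intro j _; positivity
        · intro j _
          have := Real.add_one_le_exp (‖q‖ ^ (2*j+2))
          linarith
    _ = Real.exp (∑ j ∈ Finset.range n, ‖q‖ ^ (2*j+2)) := (Real.exp_sum _ _).symm
    _ ≤ Real.exp ((1 - ‖q‖^2)⁻¹) := by
        apply Real.exp_le_exp.2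
        calc ∑ j ∈ Finset.range n, ‖q‖ ^ (2*j+2)
            ≤ ∑ j ∈ Finset.range n, (‖q‖^2) ^ j := by
              apply Finset.sum_le_sum
              intro j _
              have h1 : ‖q‖ ^ (2*j+2) = (‖q‖^2)^j * ‖q‖^2 := by ring
              rw [h1]
              have h2 : (0:ℝ) ≤ (‖q‖^2)^j := by positivity
              nlinarith [norm_nonneg q]
          _ ≤ (1 - ‖q‖^2)⁻¹ := by
              have hs := hasSum_geometric_of_lt_one (by positivity : (0:ℝ) ≤ ‖q‖^2) hr2
              exact Summable.sum_le_tsum (Finset.range n) (fun j _ => by positivity)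
                hs.summable |>.trans_eq hs.tsum_eq

lemma qpoch_ne_zero (q : ℂ) (hq : ‖q‖ < 1) (m : ℕ) : qPoch q (q^2) m ≠ 0 := by
  rw [qPoch, Finset.prod_ne_zero_iff]
  intro j _
  intro h
  have h2 : q * (q^2)^j = 1 := by linear_combination -h
  have h3 : ‖q * (q^2)^j‖ < 1 := by
    rw [norm_mul, norm_pow, norm_pow]
    calc ‖q‖ * (‖q‖^2)^j ≤ ‖q‖ * 1 := by
          apply mul_le_mul_of_nonneg_left _ (norm_nonneg q)
          exact pow_le_one₀ (by positivity) (by nlinarith [norm_nonneg q])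
      _ < 1 := by rwa [mul_one]
  rw [h2] at h3
  simp at h3

lemma hcol (q : ℂ) (hq : ‖q‖ < 1) (k : ℕ) : Summable (fun n : ℕ => q^(n+1) * myP q n k) := by
  apply Summable.of_norm_bounded (g := fun n => Real.exp ((1 - ‖q‖^2)⁻¹) * (‖q‖ * ‖q‖^n))
  · exact ((summable_geometric_of_lt_one (norm_nonneg q) hq).mul_left ‖q‖).mul_left _
  · intro n
    rw [norm_mul, norm_pow]
    calc ‖q‖^(n+1) * ‖myP q n k‖
        ≤ ‖q‖^(n+1) * Real.exp ((1 - ‖q‖^2)⁻¹) := by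
          apply mul_le_mul_of_nonneg_left _ (by positivity)
          exact (myP_norm_le q n k).trans (prod_bound q hq n)
      _ = Real.exp ((1 - ‖q‖^2)⁻¹) * (‖q‖ * ‖q‖^n) := by ring

lemma hrow (q : ℂ) (n : ℕ) : Summable (fun k : ℕ => q^(n+1) * myP q n k) := by
  apply summable_of_ne_finset_zero (s := Finset.range (n+1))
  intro k hk
  rw [myP_eq_zero q n k (by simpa using hk), mul_zero]

lemma huncurry (q : ℂ) (hq : ‖q‖ < 1) :
    Summable (Function.uncurry fun n k : ℕ => q^(n+1) * myP q n k) := by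
  apply Summable.of_norm
  rw [summable_prod_of_nonneg (fun p => norm_nonneg _)]
  constructor
  · intro n
    exact (hrow q n).norm
  · have hE : (0:ℝ) ≤ Real.exp ((1 - ‖q‖^2)⁻¹) := le_of_lt (Real.exp_pos _)
    refine Summable.of_nonneg_of_le
      (f := fun n : ℕ => Real.exp ((1 - ‖q‖^2)⁻¹) * (((n:ℝ)+1) * (‖q‖ * ‖q‖^n)))
      (fun n => tsum_nonneg fun k => norm_nonneg _) ?_ ?_
    · intro n
      have h1 : ∑' k : ℕ, ‖(Function.uncurry fun n k : ℕ => q^(n+1) * myP q n k) (n, k)‖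
          = ∑ k ∈ Finset.range (n+1), ‖q^(n+1) * myP q n k‖ := by
        apply tsum_eq_sum
        intro k hk
        simp [Function.uncurry, myP_eq_zero q n k (by simpa using hk)]
      rw [h1]
      calc ∑ k ∈ Finset.range (n+1), ‖q^(n+1) * myP q n k‖
          ≤ ∑ k ∈ Finset.range (n+1), ‖q‖^(n+1) * Real.exp ((1 - ‖q‖^2)⁻¹) := by
            apply Finset.sum_le_sum
            intro k _
            rw [norm_mul, norm_pow]
            exact mul_le_mul_of_nonneg_left
              ((myP_norm_le q n k).trans (prod_bound q hq n)) (by positivity)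
        _ = ((n:ℝ)+1) * (‖q‖^(n+1) * Real.exp ((1 - ‖q‖^2)⁻¹)) := by
            rw [Finset.sum_const, Finset.card_range]
            ring
        _ = Real.exp ((1 - ‖q‖^2)⁻¹) * (((n:ℝ)+1) * (‖q‖ * ‖q‖^n)) := by ring
    · apply Summable.mul_left
      have h2 : Summable (fun n : ℕ => (n:ℝ) * ‖q‖^n) := by
        have := summable_pow_mul_geometric_of_norm_lt_one (R := ℝ) 1
          (r := ‖q‖) (by rwa [Real.norm_eq_abs, abs_of_nonneg (norm_nonneg q)])
        simpa using this
      have h3 : Summable (fun n : ℕ => ‖q‖ * ((n:ℝ) * ‖q‖^n) + ‖q‖ * ‖q‖^n) :=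
        (h2.mul_left _).add ((summable_geometric_of_lt_one (norm_nonneg q) hq).mul_left _)
      apply h3.congr
      intro n
      ring

lemma hF (q : ℂ) (hq : ‖q‖ < 1) :
    ∀ k : ℕ, ∑' n : ℕ, q^(n+1) * myP q n k = q^((k+1)^2) / qPoch q (q^2) (k+1) := by
  intro k
  induction k with
  | zero =>
    have h1 : ∀ n : ℕ, q^(n+1) * myP q n 0 = q * q^n := by
      intro n; rw [myP_zero_right]; ring
    rw [tsum_congr h1, tsum_mul_left, tsum_geometric_of_norm_lt_one hq]
    have h2 : qPoch q (q^2) 1 = 1 - q := by simp [qPoch]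
    rw [h2]
    norm_num [div_eq_mul_inv]
  | succ k ih =>
    have ha : ‖q ^ (2*k+3)‖ < 1 := by
      rw [norm_pow]; exact pow_lt_one₀ (norm_nonneg q) hq (by omega)
    have hone : (1:ℂ) - q^(2*k+3) ≠ 0 := by
      intro h
      have h2 : q^(2*k+3) = 1 := by linear_combination -h
      rw [h2] at ha; simp at ha
    have heq : ∑' n : ℕ, q^(n+1) * myP q n (k+1)
        = q^(2*k+3) * (∑' n : ℕ, q^(n+1) * myP q n k)
          + q^(2*k+3) * (∑' n : ℕ, q^(n+1) * myP q n (k+1)) := by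
      have h0 : q^(0+1) * myP q 0 (k+1) = 0 := by simp [myP]
      have h1 : ∀ n : ℕ, q^(n+1+1) * myP q (n+1) (k+1)
          = q^(2*k+3) * (q^(n+1) * myP q n k) + q^(2*k+3) * (q^(n+1) * myP q n (k+1)) := by
        intro n; rw [myP_shift]; ring
      calc ∑' n : ℕ, q^(n+1) * myP q n (k+1)
          = q^(0+1) * myP q 0 (k+1) + ∑' n : ℕ, q^(n+1+1) * myP q (n+1) (k+1) :=
            Summable.tsum_eq_zero_add (hcol q hq (k+1))
        _ = ∑' n : ℕ, (q^(2*k+3) * (q^(n+1) * myP q n k)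
              + q^(2*k+3) * (q^(n+1) * myP q n (k+1))) := by
            rw [h0, zero_add]; exact tsum_congr h1
        _ = q^(2*k+3) * (∑' n : ℕ, q^(n+1) * myP q n k)
              + q^(2*k+3) * (∑' n : ℕ, q^(n+1) * myP q n (k+1)) := by
            rw [Summable.tsum_add ((hcol q hq k).mul_left _) ((hcol q hq (k+1)).mul_left _),
              tsum_mul_left, tsum_mul_left]
    rw [ih] at heq
    have hD := qpoch_ne_zero q hq (k+1)
    have hpoch : qPoch q (q^2) (k+1+1) = qPoch q (q^2) (k+1) * (1 - q^(2*k+3)) := by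
      simp only [qPoch, Finset.prod_range_succ]; ring
    rw [hpoch, eq_div_iff (mul_ne_zero hD hone)]
    have hpow : q^((k+1+1)^2) = q^(2*k+3) * q^((k+1)^2) := by
      rw [← pow_add]; congr 1; ring
    rw [hpow]
    have hq2 : q^((k+1)^2) / qPoch q (q^2) (k+1) * qPoch q (q^2) (k+1) = q^((k+1)^2) :=
      div_mul_cancel₀ _ hD
    linear_combination qPoch q (q^2) (k+1) * heq + q^(2*k+3) * hq2

theorem psi_eulerian_eq_alt (q : ℂ) (hq : ‖q‖ < 1) :
    ∑' n : ℕ, q ^ ((n + 1) ^ 2) / qPoch q (q ^ 2) (n + 1)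
      = ∑' n : ℕ, q ^ (n + 1) * qPoch (-q ^ 2) (q ^ 2) n := by
  calc ∑' k : ℕ, q ^ ((k + 1) ^ 2) / qPoch q (q ^ 2) (k + 1)
      = ∑' k : ℕ, ∑' n : ℕ, q^(n+1) * myP q n k :=
        tsum_congr fun k => (hF q hq k).symm
    _ = ∑' n : ℕ, ∑' k : ℕ, q^(n+1) * myP q n k :=
        Summable.tsum_comm' (huncurry q hq) (fun n => hrow q n) (fun k => hcol q hq k)
    _ = ∑' n : ℕ, q ^ (n + 1) * qPoch (-q ^ 2) (q ^ 2) n := by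
        apply tsum_congr
        intro n
        have h1 : ∑' k : ℕ, q^(n+1) * myP q n k
            = ∑ k ∈ Finset.range (n+1), q^(n+1) * myP q n k := by
          apply tsum_eq_sum
          intro k hk
          rw [myP_eq_zero q n k (by simpa using hk), mul_zero]
        rw [h1, ← Finset.mul_sum, myP_row_sum]
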